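/- Define median(n) as the largest k ≤ n-2 with 2^k·(n-3)!·(2n-k-4)! ≥ (2n-5)!·(n-k-2)!. Then median(n) = √(4·ln(2)·n)·(1 + O(n^{-1/2})), i.e., there exist C > 0 and N such that |median(n) − √(4 ln 2 · n)| ≤ C for all n ≥ N. -/

import Mathlib

open Nat

lemma sum_cast_id (d : ℕ) : ∑ i ∈ Finset.range d, (i:ℝ) = d*(d-1)/2 := by
  induction d with
  | zero => simp
  | succ d ih => rw [Finset.sum_range_succ, ih]; push_cast; ring

lemma sum_rev (d : ℕ) : ∑ i ∈ Finset.range d, ((d:ℝ) - i) = d*(d+1)/2 := by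
  rw [Finset.sum_sub_distrib, sum_cast_id, Finset.sum_const, Finset.card_range]
  ring

lemma lemA (b d : ℕ) (h : (d:ℝ) * (d+1) ≤ 4 * Real.log 2 * (b+1)) :
    (∏ i ∈ Finset.range d, ((2*b+d+2+i : ℕ):ℝ)) ≤
      2^(d+1) * ∏ i ∈ Finset.range d, ((b+1+i:ℕ):ℝ) := by
  have hb1 : (0:ℝ) < (b:ℝ) + 1 := by positivity
  have step1 : (∏ i ∈ Finset.range d, ((2*b+d+2+i : ℕ):ℝ)) ≤
      ∏ i ∈ Finset.range d,
        (2*((b:ℝ)+1+i) * Real.exp (((d:ℝ)-i)/(2*((b:ℝ)+1)))) := by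
    apply Finset.prod_le_prod
    · intro i _; positivity
    · intro i hi
      have hi' : (i:ℝ) ≤ (d:ℝ) - 1 := by
        have := Finset.mem_range.mp hi
        have : (i:ℝ) + 1 ≤ d := by exact_mod_cast this
        linarith
      set z : ℝ := ((d:ℝ)-i)/(2*((b:ℝ)+1)) with hz
      have hz0 : 0 ≤ z := by
        apply div_nonneg; linarith; positivity
      have hzz : 2*((b:ℝ)+1) * z = (d:ℝ) - i := by
        rw [hz, mul_comm, div_mul_cancel₀ _ (by positivity)]
      have hE : 1 + z ≤ Real.exp z := by
        have := Real.add_one_le_exp z; linarith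
      have hEp : 2*((b:ℝ)+1+i) * (1+z) ≤ 2*((b:ℝ)+1+i) * Real.exp z := by
        apply mul_le_mul_of_nonneg_left hE; positivity
      push_cast
      have hiz : 0 ≤ 2*(i:ℝ)*z := by positivity
      nlinarith [hEp, hzz, hiz]
  have step2 : ∏ i ∈ Finset.range d,
        (2*((b:ℝ)+1+i) * Real.exp (((d:ℝ)-i)/(2*((b:ℝ)+1)))) =
      2^d * (∏ i ∈ Finset.range d, ((b+1+i:ℕ):ℝ)) *
        Real.exp (∑ i ∈ Finset.range d, ((d:ℝ)-i)/(2*((b:ℝ)+1))) := by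
    rw [Finset.prod_mul_distrib, Real.exp_sum]
    congr 1
    rw [Finset.prod_congr rfl (fun i _ => show 2*((b:ℝ)+1+i) = 2 * (((b+1+i:ℕ):ℝ)) by push_cast; ring),
      Finset.prod_mul_distrib, Finset.prod_const, Finset.card_range]
  have step3 : Real.exp (∑ i ∈ Finset.range d, ((d:ℝ)-i)/(2*((b:ℝ)+1))) ≤ 2 := by
    rw [← Finset.sum_div, sum_rev]
    calc Real.exp ((d:ℝ)*(d+1)/2 / (2*((b:ℝ)+1))) ≤ Real.exp (Real.log 2) := by
          apply Real.exp_le_exp.mpr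
          rw [div_le_iff₀ (by positivity)]
          nlinarith [h]
      _ = 2 := Real.exp_log (by norm_num)
  have hP : (0:ℝ) ≤ ∏ i ∈ Finset.range d, ((b+1+i:ℕ):ℝ) := by positivity
  calc (∏ i ∈ Finset.range d, ((2*b+d+2+i : ℕ):ℝ)) ≤ _ := step1
    _ = _ := step2
    _ ≤ 2^d * (∏ i ∈ Finset.range d, ((b+1+i:ℕ):ℝ)) * 2 := by
        apply mul_le_mul_of_nonneg_left step3; positivity
    _ = 2^(d+1) * ∏ i ∈ Finset.range d, ((b+1+i:ℕ):ℝ) := by ring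

lemma lemB (b d : ℕ) (h : 4 * Real.log 2 * ((b:ℝ)+(d:ℝ)+1) < (d:ℝ)*((d:ℝ)+1)) :
    2^(d+1) * (∏ i ∈ Finset.range d, ((b+1+i:ℕ):ℝ))
      < ∏ i ∈ Finset.range d, ((2*b+d+2+i:ℕ):ℝ) := by
  have hlog : 0 < Real.log 2 := Real.log_pos (by norm_num)
  have hbd : (0:ℝ) < (b:ℝ) + (d:ℝ) + 1 := by positivity
  have step1 : (∏ i ∈ Finset.range d,
        (2*((b:ℝ)+1+i) * Real.exp (((d:ℝ)-i)/(2*((b:ℝ)+(d:ℝ)+1)))))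
      ≤ ∏ i ∈ Finset.range d, ((2*b+d+2+i : ℕ):ℝ) := by
    apply Finset.prod_le_prod
    · intro i _; positivity
    · intro i hi
      have hi' : (i:ℝ) ≤ (d:ℝ) - 1 := by
        have := Finset.mem_range.mp hi
        have : (i:ℝ) + 1 ≤ d := by exact_mod_cast this
        linarith
      have hX : (0:ℝ) < 2*(b:ℝ)+(d:ℝ)+2+(i:ℝ) := by positivity
      set x : ℝ := ((d:ℝ)-i)/(2*(b:ℝ)+(d:ℝ)+2+(i:ℝ)) with hxdef
      have hx0 : 0 ≤ x := by
        apply div_nonneg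
        · linarith
        · linarith
      have hxe : (1 - x) * (2*(b:ℝ)+(d:ℝ)+2+(i:ℝ)) = 2*((b:ℝ)+1+i) := by
        rw [hxdef, sub_mul, div_mul_cancel₀ _ hX.ne']
        ring
      have hexp1 : (1 - x) * Real.exp x ≤ 1 := by
        have h1 : -x + 1 ≤ Real.exp (-x) := Real.add_one_le_exp (-x)
        have h2 : Real.exp (-x) * Real.exp x = 1 := by
          rw [← Real.exp_add]; simp
        nlinarith [Real.exp_pos x]
      have hwx : Real.exp (((d:ℝ)-i)/(2*((b:ℝ)+(d:ℝ)+1))) ≤ Real.exp x := by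
        apply Real.exp_le_exp.mpr
        rw [hxdef]
        gcongr
        · linarith
        · linarith
      have h3 : 2*((b:ℝ)+1+i) * Real.exp (((d:ℝ)-i)/(2*((b:ℝ)+(d:ℝ)+1)))
          ≤ 2*((b:ℝ)+1+i) * Real.exp x :=
        mul_le_mul_of_nonneg_left hwx (by positivity)
      push_cast
      nlinarith [h3, hexp1, hxe, hX, Real.exp_pos x]
  have step2 : ∏ i ∈ Finset.range d,
        (2*((b:ℝ)+1+i) * Real.exp (((d:ℝ)-i)/(2*((b:ℝ)+(d:ℝ)+1)))) =
      2^d * (∏ i ∈ Finset.range d, ((b+1+i:ℕ):ℝ)) *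
        Real.exp (∑ i ∈ Finset.range d, ((d:ℝ)-i)/(2*((b:ℝ)+(d:ℝ)+1))) := by
    rw [Finset.prod_mul_distrib, Real.exp_sum]
    congr 1
    rw [Finset.prod_congr rfl (fun i _ => show 2*((b:ℝ)+1+i) = 2 * (((b+1+i:ℕ):ℝ)) by push_cast; ring),
      Finset.prod_mul_distrib, Finset.prod_const, Finset.card_range]
  have step3 : (2:ℝ) < Real.exp (∑ i ∈ Finset.range d, ((d:ℝ)-i)/(2*((b:ℝ)+(d:ℝ)+1))) := by
    rw [← Finset.sum_div, sum_rev]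
    calc (2:ℝ) = Real.exp (Real.log 2) := (Real.exp_log (by norm_num)).symm
      _ < _ := by
          apply Real.exp_lt_exp.mpr
          rw [lt_div_iff₀ (by positivity)]
          nlinarith [h]
  have hPpos : (0:ℝ) < ∏ i ∈ Finset.range d, ((b+1+i:ℕ):ℝ) := by
    apply Finset.prod_pos
    intro i _
    have : 0 < b + 1 + i := by omega
    exact_mod_cast this
  calc 2^(d+1) * (∏ i ∈ Finset.range d, ((b+1+i:ℕ):ℝ))
      = 2^d * (∏ i ∈ Finset.range d, ((b+1+i:ℕ):ℝ)) * 2 := by ring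
    _ < 2^d * (∏ i ∈ Finset.range d, ((b+1+i:ℕ):ℝ)) *
        Real.exp (∑ i ∈ Finset.range d, ((d:ℝ)-i)/(2*((b:ℝ)+(d:ℝ)+1))) := by
        apply mul_lt_mul_of_pos_left step3; positivity
    _ = _ := step2.symm
    _ ≤ _ := step1

lemma prodb (b d : ℕ) : (b + d)! = b ! * ∏ i ∈ Finset.range d, (b + 1 + i) := by
  induction d with
  | zero => simp
  | succ d ih =>
    rw [show b + (d+1) = (b+d)+1 from rfl, Nat.factorial_succ, ih, Finset.prod_range_succ]
    ring

lemma natcond_iff (b d : ℕ) :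
    ((2*b+2*d+1)! * b ! ≤ 2^(d+1) * (b+d)! * (2*b+d+1)!) ↔
    ((∏ i ∈ Finset.range d, (2*b+d+2+i)) ≤ 2^(d+1) * ∏ i ∈ Finset.range d, (b+1+i)) := by
  have h1 : (2*b+2*d+1)! = (2*b+d+1)! * ∏ i ∈ Finset.range d, (2*b+d+2+i) := by
    have h := prodb (2*b+d+1) d
    rw [show 2*b+d+1+d = 2*b+2*d+1 by ring] at h
    rw [h]
  have h2 : (b+d)! = b ! * ∏ i ∈ Finset.range d, (b+1+i) := prodb b d
  have hpos : 0 < b ! * (2*b+d+1)! := Nat.mul_pos (Nat.factorial_pos _) (Nat.factorial_pos _)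
  rw [h1, h2,
    show (2*b+d+1)! * (∏ i ∈ Finset.range d, (2*b+d+2+i)) * b ! =
      (b ! * (2*b+d+1)!) * ∏ i ∈ Finset.range d, (2*b+d+2+i) by ring,
    show 2^(d+1) * (b ! * ∏ i ∈ Finset.range d, (b+1+i)) * (2*b+d+1)! =
      (b ! * (2*b+d+1)!) * (2^(d+1) * ∏ i ∈ Finset.range d, (b+1+i)) by ring]
  exact ⟨fun h => Nat.le_of_mul_le_mul_left h hpos, fun h => Nat.mul_le_mul_left _ h⟩

lemma cond_step (n k : ℕ) (hk : k + 1 ≤ n - 2) (hn : 4 ≤ n)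
    (h : (2*n-5)! * (n-(k+1)-2)! ≤ 2^(k+1) * (n-3)! * (2*n-(k+1)-4)!) :
    (2*n-5)! * (n-k-2)! ≤ 2^k * (n-3)! * (2*n-k-4)! := by
  obtain ⟨c, rfl⟩ : ∃ c, n = c+k+3 := ⟨n-k-3, by omega⟩
  rw [show 2*(c+k+3)-5 = 2*c+2*k+1 by omega, show (c+k+3)-(k+1)-2 = c by omega,
      show (c+k+3)-3 = c+k by omega, show 2*(c+k+3)-(k+1)-4 = 2*c+k+1 by omega] at h
  rw [show 2*(c+k+3)-5 = 2*c+2*k+1 by omega, show (c+k+3)-k-2 = c+1 by omega,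
      show (c+k+3)-3 = c+k by omega, show 2*(c+k+3)-k-4 = 2*c+k+2 by omega]
  have h' := Nat.mul_le_mul_right (c+1) h
  have key : 2^(k+1) * (c+1) ≤ 2^k * (2*c+k+2) := by
    rw [pow_succ]
    calc 2^k*2*(c+1) = 2^k * (2*(c+1)) := by ring
      _ ≤ 2^k * (2*c+k+2) := Nat.mul_le_mul_left _ (by omega)
  calc (2*c+2*k+1)! * (c+1)! = (2*c+2*k+1)! * c ! * (c+1) := by
        rw [Nat.factorial_succ c]; ring
    _ ≤ 2^(k+1)*(c+k)!*(2*c+k+1)! * (c+1) := h'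
    _ = (2^(k+1)*(c+1)) * ((c+k)! * (2*c+k+1)!) := by ring
    _ ≤ (2^k*(2*c+k+2)) * ((c+k)! * (2*c+k+1)!) := Nat.mul_le_mul_right _ key
    _ = 2^k * (c+k)! * ((2*c+k+2) * (2*c+k+1)!) := by ring
    _ = 2^k * (c+k)! * (2*c+k+2)! := by rw [Nat.factorial_succ (2*c+k+1)]

lemma cond_zero (n : ℕ) (hn : 4 ≤ n) :
    (2*n-5)! * (n-0-2)! ≤ 2^0 * (n-3)! * (2*n-0-4)! := by
  obtain ⟨c, rfl⟩ : ∃ c, n = c+4 := ⟨n-4, by omega⟩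
  rw [show 2*(c+4)-5 = 2*c+3 by omega, show (c+4)-0-2 = c+2 by omega,
      show (c+4)-3 = c+1 by omega, show 2*(c+4)-0-4 = 2*c+4 by omega]
  rw [pow_zero, one_mul, Nat.factorial_succ (c+1), Nat.factorial_succ (2*c+3)]
  calc (2*c+3)! * ((c+2) * (c+1)!) = (c+2) * ((c+1)! * (2*c+3)!) := by ring
    _ ≤ (2*c+4) * ((c+1)! * (2*c+3)!) := Nat.mul_le_mul_right _ (by omega)
    _ = (c+1)! * ((2*c+4) * (2*c+3)!) := by ring

lemma S_down (n : ℕ) (hn : 4 ≤ n) :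
    ∀ k, (k ≤ n-2 ∧ (2*n-5)! * (n-k-2)! ≤ 2^k * (n-3)! * (2*n-k-4)!) →
    ∀ j, j ≤ k → (j ≤ n-2 ∧ (2*n-5)! * (n-j-2)! ≤ 2^j * (n-3)! * (2*n-j-4)!) := by
  intro k
  induction k with
  | zero =>
    intro h j hj
    have : j = 0 := by omega
    subst this; exact h
  | succ k ih =>
    intro h j hj
    rcases Nat.lt_or_ge j (k+1) with hlt | hge
    · exact ih ⟨by omega, cond_step n k h.1 hn h.2⟩ j (by omega)
    · have : j = k+1 := by omega
      subst this; exact h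

lemma cond_bd (b d : ℕ) :
    ((2*(b+d+3)-5)! * ((b+d+3)-(d+1)-2)! ≤ 2^(d+1) * ((b+d+3)-3)! * (2*(b+d+3)-(d+1)-4)!) ↔
    ((∏ i ∈ Finset.range d, (2*b+d+2+i)) ≤ 2^(d+1) * ∏ i ∈ Finset.range d, (b+1+i)) := by
  rw [show 2*(b+d+3)-5 = 2*b+2*d+1 by omega, show (b+d+3)-(d+1)-2 = b by omega,
      show (b+d+3)-3 = b+d by omega, show 2*(b+d+3)-(d+1)-4 = 2*b+d+1 by omega]
  exact natcond_iff b d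

/-- The median of the distance between two leaves in a fully resolved unrooted phylogenetic
tree with `n` leaves. -/
noncomputable def median (n : ℕ) : ℕ :=
  sSup {k : ℕ | k ≤ n - 2 ∧ (2 * n - 5)! * (n - k - 2)! ≤ 2 ^ k * (n - 3)! * (2 * n - k - 4)!}

theorem median_bounded_error :
    ∃ C : ℝ, 0 < C ∧ ∃ N : ℕ, ∀ n : ℕ, N ≤ n →
      |(median n : ℝ) - Real.sqrt (4 * Real.log 2 * n)| ≤ C := by
  refine ⟨3, by norm_num, 10000, fun n hn => ?_⟩
  have hn4 : 4 ≤ n := by omega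
  set L := Real.log 2 with hLdef
  have hL1 : 0.6931471803 < L := Real.log_two_gt_d9
  have hL2 : L < 0.6931471808 := Real.log_two_lt_d9
  have hnR : (10000:ℝ) ≤ (n:ℝ) := by exact_mod_cast hn
  set m := Real.sqrt (4 * L * (n:ℝ)) with hmdef
  have hm0 : 0 ≤ m := Real.sqrt_nonneg _
  have hm2 : m^2 = 4*L*(n:ℝ) := Real.sq_sqrt (by positivity)
  have hm_lb : (140:ℝ) ≤ m := by nlinarith
  have hm_ub : m ≤ (n:ℝ)/2 - 4 := by nlinarith
  set M := ⌊m⌋₊ with hMdef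
  have hM_le : (M:ℝ) ≤ m := Nat.floor_le hm0
  have hM_gt : m < (M:ℝ) + 1 := Nat.lt_floor_add_one m
  have hM100 : 100 ≤ M := Nat.le_floor (by push_cast; linarith)
  have hMn : M + 8 ≤ n := by
    have : (M:ℝ) + 8 ≤ (n:ℝ) := by linarith
    exact_mod_cast this
  set S := {k : ℕ | k ≤ n - 2 ∧ (2 * n - 5)! * (n - k - 2)! ≤ 2 ^ k * (n - 3)! * (2 * n - k - 4)!}
    with hSdef
  have hS_bdd : BddAbove S := ⟨n-2, fun k hk => hk.1⟩
  have hS_ne : S.Nonempty := ⟨0, by omega, cond_zero n hn4⟩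
  have hmed : median n = sSup S := rfl
  -- upper bound: M+2 ∉ S
  have hKnot : (M+2) ∉ S := by
    intro hK
    set d := M + 1 with hddef
    set b := n - M - 4 with hbdef
    have hbR : (b:ℝ) = (n:ℝ) - (M:ℝ) - 4 := by
      rw [hbdef, Nat.cast_sub (show 4 ≤ n - M by omega), Nat.cast_sub (show M ≤ n by omega)]
      push_cast; ring
    have hcond := hK.2
    rw [show n = b + d + 3 by omega, show M + 2 = d + 1 by omega] at hcond
    have hnat : (∏ i ∈ Finset.range d, (2*b+d+2+i)) ≤ 2^(d+1) * ∏ i ∈ Finset.range d, (b+1+i) :=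
      (cond_bd b d).mp hcond
    have hR : (∏ i ∈ Finset.range d, ((2*b+d+2+i:ℕ):ℝ)) ≤
        2^(d+1) * ∏ i ∈ Finset.range d, ((b+1+i:ℕ):ℝ) := by
      exact_mod_cast hnat
    have hlt := lemB b d (by
      push_cast [hbR, hddef]
      rw [← hLdef]
      nlinarith [mul_self_lt_mul_self hm0 hM_gt])
    linarith
  have hub : median n ≤ M + 1 := by
    rw [hmed]
    apply csSup_le hS_ne
    intro k hk
    by_contra hlt
    exact hKnot (S_down n hn4 k hk (M+2) (by omega))
  -- lower bound: M-2 ∈ S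
  have hlbmem : (M-2) ∈ S := by
    set d := M - 3 with hddef
    set b := n - M with hbdef
    have hbR : (b:ℝ) = (n:ℝ) - (M:ℝ) := by
      rw [hbdef]; push_cast [Nat.cast_sub (by omega : M ≤ n)]; ring
    have hdR : (d:ℝ) = (M:ℝ) - 3 := by
      rw [hddef]; push_cast [Nat.cast_sub (by omega : 3 ≤ M)]; ring
    have hA := lemA b d (by
      rw [hbR, hdR]
      nlinarith)
    have hnat : (∏ i ∈ Finset.range d, (2*b+d+2+i)) ≤ 2^(d+1) * ∏ i ∈ Finset.range d, (b+1+i) := by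
      exact_mod_cast hA
    constructor
    · omega
    · have := (cond_bd b d).mpr hnat
      rw [show b + d + 3 = n by omega, show d + 1 = M - 2 by omega] at this
      exact this
  have hlb : M - 2 ≤ median n := by
    rw [hmed]
    exact le_csSup hS_bdd hlbmem
  -- conclude
  have hcast_ub : (median n : ℝ) ≤ (M:ℝ) + 1 := by exact_mod_cast hub
  have hcast_lb : (M:ℝ) - 2 ≤ (median n : ℝ) := by
    have : ((M-2:ℕ):ℝ) ≤ (median n : ℝ) := by exact_mod_cast hlb
    rw [Nat.cast_sub (by omega : 2 ≤ M)] at this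
    push_cast at this
    linarith
  rw [abs_le]
  constructor <;> [skip; skip] <;> linarith
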